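/- Let Γ be a countable residually finite discrete group and (Γ_n, n ≥ 1) a sequence of finite-index normal subgroups with lim Γ_n = {1}. Then for every f ∈ ℓ¹(Γ,ℂ) and every complex polynomial Q, the normalized traces converge: ⟨Q(ρ_f) δ₁, δ₁⟩ = lim_{n→∞} ⟨Q(ρ_{f^{(n)}}) δ_{1̄}, δ_{1̄}⟩, where δ₁ and δ_{1̄} denote the indicator functions of the identity in ℓ²(Γ,ℂ) and ℓ²(Γ/Γ_n,ℂ) respectively. -/

import Mathlib

open scoped BigOperators symmDiff Pointwise

noncomputable section

/-- The additive circle `𝕋 = ℝ/ℤ`. -/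
abbrev Torus : Type := AddCircle (1 : ℝ)

section GroupDefs

variable {Γ : Type*} [Group Γ]

/-- For `f ∈ ℤΓ`, the map `ρ_f : 𝕋^Γ → 𝕋^Γ`, `(ρ_f x)_{γ'} = Σ_γ f_γ • x_{γ'γ}`. -/
def rhoT (f : Γ →₀ ℤ) (x : Γ → Torus) : Γ → Torus :=
  fun γ' => f.sum fun γ c => c • x (γ' * γ)

/-- The compact abelian group `X_f = ker ρ_f ⊆ 𝕋^Γ` (as a subset). -/
def XSet (f : Γ →₀ ℤ) : Set (Γ → Torus) := {x | rhoT f x = 0}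

/-- The left shift `(λ^γ x)_{γ'} = x_{γ⁻¹ γ'}` on `𝕋^Γ`; restricted to `X_f` this is `α_f^γ`. -/
def lsh (γ : Γ) (x : Γ → Torus) : Γ → Torus := fun γ' => x (γ⁻¹ * γ')

/-- The left shift `(λ^γ w)_{γ'} = w_{γ⁻¹ γ'}` on real-valued functions. -/
def lshR (γ : Γ) (w : Γ → ℝ) : Γ → ℝ := fun γ' => w (γ⁻¹ * γ')

/-- Expansiveness of the `Γ`-action `α_f` on `X_f`: there is an open neighbourhood `U`
of `0` such that the only point of `X_f` all of whose translates stay in `U` is `0`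
(equivalently, `⋂_γ α_f^γ (U ∩ X_f) = {0}`). -/
def ExpansiveAction (f : Γ →₀ ℤ) : Prop :=
  ∃ U : Set (Γ → Torus), IsOpen U ∧ {x | x ∈ XSet f ∧ ∀ γ : Γ, lsh γ x ∈ U} = {0}

/-- `w ∈ ℓ∞(Γ)`: boundedness of a real-valued function. -/
def Bdd (w : Γ → ℝ) : Prop := ∃ C : ℝ, ∀ γ : Γ, |w γ| ≤ C

/-- `w ∈ ℓ∞(Γ,ℤ)`: all values are integers. -/
def IntValued (w : Γ → ℝ) : Prop := ∀ γ : Γ, ∃ k : ℤ, w γ = (k : ℝ)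

/-- For `f ∈ ℤΓ`, the operator `ρ_f` on `ℓ∞(Γ)`: `(ρ_f w)_γ = Σ_{γ'} w_{γγ'} f_{γ'}`. -/
def rhoInf (f : Γ →₀ ℤ) (w : Γ → ℝ) : Γ → ℝ :=
  fun γ => f.sum fun γ' c => (c : ℝ) * w (γ * γ')

/-- For `h ∈ ℓ¹(Γ)`, the operator `ρ_h` on `ℓ∞(Γ)`: `(ρ_h w)_γ = Σ_{γ'} w_{γγ'} h_{γ'}`. -/
def rhoL1 (h : Γ → ℝ) (w : Γ → ℝ) : Γ → ℝ :=
  fun γ => ∑' γ' : Γ, w (γ * γ') * h γ'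

/-- Convolution on `ℓ¹(Γ)`: `(g·h)_γ = Σ_{γ'} g_{γ'} h_{γ'⁻¹γ}`. -/
def conv (g h : Γ → ℝ) : Γ → ℝ := fun γ => ∑' γ' : Γ, g γ' * h (γ'⁻¹ * γ)

/-- Convolution on `ℓ¹(Γ,ℂ)`. -/
def convC (g h : Γ → ℂ) : Γ → ℂ := fun γ => ∑' γ' : Γ, g γ' * h (γ'⁻¹ * γ)

open Classical in
/-- The unit `δ₁` of the convolution algebra `ℓ¹(Γ)`. -/
def deltaOne : Γ → ℝ := fun γ => if γ = 1 then 1 else 0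

open Classical in
/-- The unit `δ₁` of `ℓ¹(Γ,ℂ)`. -/
def deltaOneC : Γ → ℂ := fun γ => if γ = 1 then 1 else 0

/-- `g` is a two-sided convolution inverse of `f` in `ℓ¹(Γ)`. -/
def IsL1Inverse (f g : Γ → ℝ) : Prop :=
  Summable g ∧ conv f g = deltaOne ∧ conv g f = deltaOne

/-- View `f ∈ ℤΓ` as an element of `ℓ¹(Γ)`. -/
def fR (f : Γ →₀ ℤ) : Γ → ℝ := fun γ => (f γ : ℝ)

/-- View `f ∈ ℤΓ` as an element of `ℓ¹(Γ,ℂ)`. -/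
def fCC (f : Γ →₀ ℤ) : Γ → ℂ := fun γ => (f γ : ℂ)

/-- The `ℓ¹`-norm `‖f‖₁` of `f ∈ ℤΓ`. -/
def finsuppL1 (f : Γ →₀ ℤ) : ℝ := f.sum fun _ c => |(c : ℝ)|

/-- The `ℓ¹`-norm of `h ∈ ℓ¹(Γ,ℂ)`. -/
def l1normC (h : Γ → ℂ) : ℝ := ∑' γ : Γ, ‖h γ‖

/-- Coordinatewise reduction mod 1, `η : ℓ∞(Γ) → 𝕋^Γ`. -/
def etaT (w : Γ → ℝ) : Γ → Torus := fun γ => ((w γ : ℝ) : Torus)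

/-- The map `ξ = η ∘ ρ_{w}` for `w ∈ ℓ¹(Γ)`. -/
def xiMap (w : Γ → ℝ) (v : Γ → ℝ) : Γ → Torus := etaT (rhoL1 w v)

/-- A point `x ∈ 𝕋^Γ` is homoclinic if `λ^γ x → 0` along the cofinite filter on `Γ`. -/
def IsHomoclinic (x : Γ → Torus) : Prop :=
  Filter.Tendsto (fun γ : Γ => lsh γ x) Filter.cofinite (nhds 0)

/-- The set of `Γ'`-fixed points of `α_f` in `X_f`. -/
def FixSet (f : Γ →₀ ℤ) (Γ' : Subgroup Γ) : Set (Γ → Torus) :=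
  {x | x ∈ XSet f ∧ ∀ γ ∈ Γ', lsh γ x = x}

/-- Left `(K,ε)`-invariance of a finite set `Q ⊆ Γ`. -/
def LeftInv [DecidableEq Γ] (K : Finset Γ) (ε : ℝ) (Q : Finset Γ) : Prop :=
  ∑ γ ∈ K, (((Q.image fun q => γ * q) ∆ Q).card : ℝ) / (Q.card : ℝ) < ε

/-- Right `(K,ε)`-invariance of a finite set `Q ⊆ Γ`. -/
def RightInv [DecidableEq Γ] (K : Finset Γ) (ε : ℝ) (Q : Finset Γ) : Prop :=
  ∑ γ ∈ K, (((Q.image fun q => q * γ) ∆ Q).card : ℝ) / (Q.card : ℝ) < ε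

/-- Amenability: existence of a left Følner sequence. -/
def Amenable (Γ : Type*) [Group Γ] [DecidableEq Γ] : Prop :=
  ∃ Q : ℕ → Finset Γ, (∀ n, (Q n).Nonempty) ∧
    ∀ (K : Finset Γ) (ε : ℝ), 0 < ε → ∃ N : ℕ, ∀ n ≥ N, LeftInv K ε (Q n)

/-- Residual finiteness: there is a sequence of finite-index normal subgroups with
trivial intersection. -/
def ResFinite (Γ : Type*) [Group Γ] : Prop :=
  ∃ N : ℕ → Subgroup Γ, (∀ n, (N n).Normal ∧ (N n).FiniteIndex) ∧
    ∀ γ : Γ, (∀ n, γ ∈ N n) → γ = 1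

/-- `Q` is a fundamental domain for the coset space `Γ/Γ'`:
`{γQ : γ ∈ Γ'}` is a partition of `Γ`. -/
def IsFundDomain (Γ' : Subgroup Γ) (Q : Finset Γ) : Prop :=
  ∀ x : Γ, ∃! p : Γ × Γ, p.1 ∈ Γ' ∧ p.2 ∈ Q ∧ p.1 * p.2 = x

/-- `lim_n Γ_n = {1}`: for every finite `K ⊆ Γ` eventually `Γ_n ∩ K⁻¹K = {1}`. -/
def LimTriv (N : ℕ → Subgroup Γ) : Prop :=
  ∀ K : Finset Γ, ∃ M : ℕ, ∀ n ≥ M, ∀ γ ∈ N n, (∃ a ∈ K, ∃ b ∈ K, γ = a⁻¹ * b) → γ = 1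

/-- The word ball `B_F(n)` of radius `n` with respect to a generating set `F`. -/
def BallF (F : Finset Γ) (n : ℕ) : Set Γ :=
  {γ | ∃ l : List Γ, l.length ≤ n ∧ (∀ a ∈ l, a ∈ F) ∧ l.prod = γ}

end GroupDefs

/-- The Hilbert space `ℓ²(Γ,ℂ)`. -/
abbrev H2 (Γ : Type*) : Type _ := lp (fun _ : Γ => ℂ) 2

section Hilbert

variable {Γ : Type*} [Group Γ]

open Classical in
/-- The standard basis vector `δ₁ ∈ ℓ²(Γ,ℂ)`. -/
def deltaL2 : H2 Γ := lp.single 2 (1 : Γ) (1 : ℂ)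

/-- `A` is the right-convolution operator `ρ_f` on `ℓ²(Γ,ℂ)`,
`(ρ_f w)_γ = Σ_{γ'} w_{γγ'} f_{γ'}`. -/
def IsRho (f : Γ → ℂ) (A : H2 Γ →L[ℂ] H2 Γ) : Prop :=
  ∀ (w : H2 Γ) (γ : Γ), (A w : Γ → ℂ) γ = ∑' γ' : Γ, (w : Γ → ℂ) (γ * γ') * f γ'

/-- The von Neumann trace of `log (A A*)`, i.e. `tr_{NΓ}(log (A A*)) = (log(AA*) δ₁)(1)`,
where `log` is given by the continuous functional calculus. -/
def trLogAAstar (A : H2 Γ →L[ℂ] H2 Γ) : ℝ :=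
  letI : ContinuousFunctionalCalculus ℝ (H2 Γ →L[ℂ] H2 Γ) IsSelfAdjoint :=
    IsSelfAdjoint.instContinuousFunctionalCalculus
  (((cfc Real.log (A * star A)) deltaL2 : Γ → ℂ) (1 : Γ)).re

/-- The Fuglede–Kadison determinant `det_{NΓ} A = exp(½ tr(log (A A*)))`. -/
def detFK (A : H2 Γ →L[ℂ] H2 Γ) : ℝ := Real.exp (2⁻¹ * trLogAAstar A)

open Classical in
/-- `f^{(n)} : Γ/Γ_n → ℂ`, integration along the fibres: `f^{(n)}(δ) = Σ_{γ ∈ δ} f_γ`. -/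
def fQuot (f : Γ → ℂ) (H : Subgroup Γ) : (Γ ⧸ H) → ℂ :=
  fun δ => ∑' γ : Γ, if (QuotientGroup.mk γ : Γ ⧸ H) = δ then f γ else 0

open Classical in
/-- The indicator of the identity coset in `ℓ²(Γ/Γ_n, ℂ)`. -/
def deltaQuot (H : Subgroup Γ) : (Γ ⧸ H) → ℂ :=
  fun δ => if δ = (QuotientGroup.mk (1 : Γ) : Γ ⧸ H) then 1 else 0

end Hilbert


section Aux13

open Filter

set_option linter.unusedSectionVars false

variable {Γ : Type*} [Group Γ]

/-- The shear equivalence `(a,b) ↦ (a*b, b)` on `Γ × Γ`. -/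
def shearEquiv (Γ : Type*) [Group Γ] : Γ × Γ ≃ Γ × Γ where
  toFun p := (p.1 * p.2, p.2)
  invFun p := (p.1 * p.2⁻¹, p.2)
  left_inv p := by simp
  right_inv p := by simp

lemma summable_shear {u v : Γ → ℂ} (hu : Summable u) (hv : Summable v) :
    Summable (fun p : Γ × Γ => u (p.1 * p.2) * v p.2) := by
  have h : Summable (fun p : Γ × Γ => u p.1 * v p.2) :=
    summable_mul_of_summable_norm (summable_norm_iff.2 hu) (summable_norm_iff.2 hv)
  exact ((shearEquiv Γ).summable_iff (f := fun p : Γ × Γ => u p.1 * v p.2)).2 h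

lemma summable_convolve {u v : Γ → ℂ} (hu : Summable u) (hv : Summable v) :
    Summable (fun γ : Γ => ∑' γ' : Γ, u (γ * γ') * v γ') :=
  (summable_shear hu hv).prod

lemma summable_norm_prod {u v : Γ → ℂ} (hu : Summable u) (hv : Summable v) :
    Summable (fun p : Γ × Γ => ‖u p.1‖ * ‖v p.2‖) := by
  have h : Summable (fun p : Γ × Γ => u p.1 * v p.2) :=
    summable_mul_of_summable_norm (summable_norm_iff.2 hu) (summable_norm_iff.2 hv)
  have := summable_norm_iff.2 h
  simpa [norm_mul] using this

open Classical in
lemma summable_ite {u : Γ → ℂ} (hu : Summable u) (P : Γ → Prop) :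
    Summable (fun γ => if P γ then u γ else 0) := by
  refine Summable.of_norm_bounded (summable_norm_iff.2 hu) (fun γ => ?_)
  by_cases h : P γ <;> simp [h]

open Classical in
/-- Pushing a convolution down to the quotient. -/
lemma fQuot_conv (H : Subgroup Γ) [H.Normal] {u v : Γ → ℂ}
    (hu : Summable u) (hv : Summable v) (δ : Γ ⧸ H) :
    ∑' δ' : Γ ⧸ H, fQuot u H (δ * δ') * fQuot v H δ'
      = fQuot (fun γ => ∑' γ' : Γ, u (γ * γ') * v γ') H δ := by
  classical
  -- the common value
  set T : ℂ := ∑' p : Γ × Γ,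
    if (QuotientGroup.mk p.1 : Γ ⧸ H) = δ * QuotientGroup.mk p.2 then u p.1 * v p.2 else 0
    with hT
  -- LHS = T
  have hLHS : ∑' δ' : Γ ⧸ H, fQuot u H (δ * δ') * fQuot v H δ' = T := by
    have step1 : ∀ δ' : Γ ⧸ H,
        fQuot u H (δ * δ') * fQuot v H δ' =
          ∑' p : Γ × Γ,
            (if (QuotientGroup.mk p.1 : Γ ⧸ H) = δ * δ' then u p.1 else 0) *
            (if (QuotientGroup.mk p.2 : Γ ⧸ H) = δ' then v p.2 else 0) := by
      intro δ'
      refine tsum_mul_tsum_of_summable_norm ?_ ?_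
      · refine Summable.of_nonneg_of_le (fun _ => norm_nonneg _) (fun γ => ?_)
          (summable_norm_iff.2 hu)
        by_cases h : (QuotientGroup.mk γ : Γ ⧸ H) = δ * δ' <;> simp [h]
      · refine Summable.of_nonneg_of_le (fun _ => norm_nonneg _) (fun γ => ?_)
          (summable_norm_iff.2 hv)
        by_cases h : (QuotientGroup.mk γ : Γ ⧸ H) = δ' <;> simp [h]
    set G : (Γ ⧸ H) × (Γ × Γ) → ℂ := fun q =>
      (if (QuotientGroup.mk q.2.1 : Γ ⧸ H) = δ * q.1 then u q.2.1 else 0) *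
      (if (QuotientGroup.mk q.2.2 : Γ ⧸ H) = q.1 then v q.2.2 else 0) with hG
    set ι : Γ × Γ → (Γ ⧸ H) × (Γ × Γ) := fun p => ((QuotientGroup.mk p.2 : Γ ⧸ H), p) with hι
    have hinj : Function.Injective ι := fun p q h => congrArg Prod.snd h
    have hsupp : Function.support G ⊆ Set.range ι := by
      intro q hq
      rcases q with ⟨δ'', p⟩
      by_cases h : (QuotientGroup.mk p.2 : Γ ⧸ H) = δ''
      · exact ⟨p, by simp [hι, h]⟩
      · exact absurd (by simp [hG, h]) hq
    have hcomp : ∀ p : Γ × Γ, G (ι p) =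
        if (QuotientGroup.mk p.1 : Γ ⧸ H) = δ * QuotientGroup.mk p.2
          then u p.1 * v p.2 else 0 := by
      intro p
      by_cases h : (QuotientGroup.mk p.1 : Γ ⧸ H) = δ * QuotientGroup.mk p.2 <;>
        simp [hG, hι, h]
    have hGι : Summable (fun p : Γ × Γ => G (ι p)) := by
      refine Summable.of_norm_bounded (summable_norm_prod hu hv) (fun p => ?_)
      rw [hcomp]
      by_cases h : (QuotientGroup.mk p.1 : Γ ⧸ H) = δ * QuotientGroup.mk p.2
      · simp [h, norm_mul]
      · simp only [h, if_neg, not_false_iff, norm_zero]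
        positivity
    have hGsum : Summable G := (hinj.summable_iff (by
      intro q hq
      by_contra h
      exact hq (hsupp h))).1 hGι
    calc ∑' δ' : Γ ⧸ H, fQuot u H (δ * δ') * fQuot v H δ'
        = ∑' δ' : Γ ⧸ H, ∑' p : Γ × Γ, G (δ', p) := by
          refine tsum_congr fun δ' => ?_; rw [step1]
      _ = ∑' q, G q := (Summable.tsum_prod hGsum).symm
      _ = ∑' p : Γ × Γ, G (ι p) := (hinj.tsum_eq hsupp).symm
      _ = T := by rw [hT]; exact tsum_congr fun p => hcomp p
  -- RHS = T
  have hRHS : fQuot (fun γ => ∑' γ' : Γ, u (γ * γ') * v γ') H δ = T := by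
    set F : Γ × Γ → ℂ := fun p =>
      if (QuotientGroup.mk p.1 : Γ ⧸ H) = δ then u (p.1 * p.2) * v p.2 else 0 with hF
    have hFsum : Summable F := by
      refine Summable.of_norm_bounded
        (((shearEquiv Γ).summable_iff
            (f := fun p : Γ × Γ => ‖u p.1‖ * ‖v p.2‖)).2 (summable_norm_prod hu hv))
        (fun p => ?_)
      show ‖F p‖ ≤ ‖u (p.1 * p.2)‖ * ‖v p.2‖
      rw [hF]
      by_cases h : (QuotientGroup.mk p.1 : Γ ⧸ H) = δ
      · simp [h, norm_mul]
      · simp only [h, if_neg, not_false_iff, norm_zero]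
        positivity
    set Fs : Γ × Γ → ℂ := fun p =>
      if (QuotientGroup.mk (p.1 * p.2⁻¹) : Γ ⧸ H) = δ then u p.1 * v p.2 else 0 with hFs
    have hFe : ∀ p : Γ × Γ, Fs (shearEquiv Γ p) = F p := by
      intro p
      simp only [hFs, hF, shearEquiv, Equiv.coe_fn_mk, mul_inv_cancel_right]
    calc fQuot (fun γ => ∑' γ' : Γ, u (γ * γ') * v γ') H δ
        = ∑' γ : Γ, ∑' γ' : Γ, F (γ, γ') := by
          refine tsum_congr fun γ => ?_
          by_cases h : (QuotientGroup.mk γ : Γ ⧸ H) = δ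
          · simp only [fQuot, hF, h, if_pos]
          · simp only [fQuot, hF, h, if_neg, not_false_iff, tsum_zero]
      _ = ∑' p : Γ × Γ, F p := (Summable.tsum_prod hFsum).symm
      _ = ∑' p : Γ × Γ, Fs (shearEquiv Γ p) := (tsum_congr fun p => (hFe p).symm)
      _ = ∑' p : Γ × Γ, Fs p := (shearEquiv Γ).tsum_eq Fs
      _ = T := by
          rw [hT]
          refine tsum_congr fun p => if_congr ?_ rfl rfl
          rw [QuotientGroup.mk_mul, QuotientGroup.mk_inv, mul_inv_eq_iff_eq_mul]
  rw [hLHS, hRHS]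

/-- The coordinates of `A^k δ₁`. -/
def gk (A : H2 Γ →L[ℂ] H2 Γ) (k : ℕ) : Γ → ℂ := fun γ => ((A ^ k) deltaL2 : lp _ 2) γ

open Classical in
lemma gk_zero (A : H2 Γ →L[ℂ] H2 Γ) :
    gk A 0 = fun γ : Γ => if γ = 1 then (1 : ℂ) else 0 := by
  classical
  funext γ
  simp only [gk, pow_zero, ContinuousLinearMap.one_apply, deltaL2]
  by_cases h : γ = 1
  · subst h; rw [lp.single_apply_self, if_pos rfl]
  · rw [lp.single_apply_ne _ _ _ h, if_neg h]

lemma gk_succ {f : Γ → ℂ} {A : H2 Γ →L[ℂ] H2 Γ} (hA : IsRho f A) (k : ℕ) :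
    gk A (k + 1) = fun γ => ∑' γ' : Γ, gk A k (γ * γ') * f γ' := by
  funext γ
  simp only [gk, pow_succ', ContinuousLinearMap.mul_apply]
  exact hA ((A ^ k) deltaL2) γ

lemma gk_summable {f : Γ → ℂ} {A : H2 Γ →L[ℂ] H2 Γ} (hf : Summable f) (hA : IsRho f A) :
    ∀ k, Summable (gk A k) := by
  intro k
  induction k with
  | zero =>
      rw [gk_zero]
      exact summable_of_ne_finset_zero (s := {(1 : Γ)}) (by intro γ hγ; simp at hγ; simp [hγ])
  | succ k ih =>
      rw [gk_succ hA]
      exact summable_convolve ih hf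

open Classical in
lemma Bpow_eq {f : Γ → ℂ} {A : H2 Γ →L[ℂ] H2 Γ} (hf : Summable f) (hA : IsRho f A)
    (H : Subgroup Γ) [H.Normal]
    (Bn : ((Γ ⧸ H) → ℂ) →ₗ[ℂ] ((Γ ⧸ H) → ℂ))
    (hBn : ∀ (w : (Γ ⧸ H) → ℂ) (δ : Γ ⧸ H),
      Bn w δ = ∑' δ' : Γ ⧸ H, w (δ * δ') * fQuot f H δ') :
    ∀ (k : ℕ) (δ : Γ ⧸ H), ((Bn ^ k) (deltaQuot H)) δ = fQuot (gk A k) H δ := by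
  intro k
  induction k with
  | zero =>
      intro δ
      rw [pow_zero, Module.End.one_apply, gk_zero]
      rw [show fQuot (fun γ : Γ => if γ = 1 then (1:ℂ) else 0) H δ
          = ∑' γ : Γ, if (QuotientGroup.mk γ : Γ ⧸ H) = δ then
              (if γ = 1 then (1:ℂ) else 0) else 0 from rfl]
      rw [tsum_eq_single (1 : Γ) (by
        intro γ hγ
        rw [if_neg hγ]
        exact ite_self 0)]
      have hin : (if ((QuotientGroup.mk (1:Γ) : Γ ⧸ H) = δ)
            then (if (1:Γ) = 1 then (1:ℂ) else 0) else 0)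
          = (if ((QuotientGroup.mk (1:Γ) : Γ ⧸ H) = δ) then (1:ℂ) else 0) := by
        by_cases h : (QuotientGroup.mk (1:Γ) : Γ ⧸ H) = δ
        · rw [if_pos h, if_pos h, if_pos rfl]
        · rw [if_neg h, if_neg h]
      rw [hin]
      show (if δ = (QuotientGroup.mk (1:Γ) : Γ ⧸ H) then (1:ℂ) else 0) = _
      by_cases h : δ = (QuotientGroup.mk (1:Γ) : Γ ⧸ H)
      · rw [if_pos h, if_pos h.symm]
      · rw [if_neg h, if_neg (fun hh => h hh.symm)]
  | succ k ih =>
      intro δ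
      rw [pow_succ', Module.End.mul_apply, hBn]
      have : ∑' δ' : Γ ⧸ H, ((Bn ^ k) (deltaQuot H)) (δ * δ') * fQuot f H δ'
          = ∑' δ' : Γ ⧸ H, fQuot (gk A k) H (δ * δ') * fQuot f H δ' :=
        tsum_congr fun δ' => by rw [ih]
      rw [this, fQuot_conv H (gk_summable hf hA k) hf, ← gk_succ hA]

set_option maxHeartbeats 1000000 in
open Classical in
lemma trace_tendsto {f : Γ → ℂ} {A : H2 Γ →L[ℂ] H2 Γ} (hf : Summable f) (hA : IsRho f A)
    (N : ℕ → Subgroup Γ) (hlim : LimTriv N) (k : ℕ) :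
    Tendsto (fun n => fQuot (gk A k) (N n) (QuotientGroup.mk (1 : Γ)))
      atTop (nhds (gk A k 1)) := by
  set g : Γ → ℂ := gk A k with hgdef
  have hg : Summable g := gk_summable hf hA k
  have hgn : Summable (fun γ => ‖g γ‖) := summable_norm_iff.2 hg
  rw [Metric.tendsto_atTop]
  intro ε hε
  have htail := tendsto_tsum_compl_atTop_zero (fun γ : Γ => ‖g γ‖)
  obtain ⟨s0, hs0⟩ := eventually_atTop.1 (htail.eventually (gt_mem_nhds hε))
  set K : Finset Γ := insert (1 : Γ) s0 with hK
  have hKlt : (∑' x : {x : Γ // x ∉ K}, ‖g x‖) < ε :=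
    hs0 K (Finset.le_iff_subset.2 (Finset.subset_insert _ _))
  obtain ⟨M, hM⟩ := hlim K
  refine ⟨M, fun n hn => ?_⟩
  set S1 : Set Γ :=
    {γ : Γ | (QuotientGroup.mk γ : Γ ⧸ N n) = QuotientGroup.mk (1 : Γ)} with hS1
  set D1 : Γ → ℂ := S1.indicator g with hD1
  set D2 : Γ → ℂ := ({(1 : Γ)} : Set Γ).indicator g with hD2
  have h1sum : Summable D1 := hg.indicator S1
  have h2sum : Summable D2 := hg.indicator _
  have e1 : fQuot g (N n) (QuotientGroup.mk (1 : Γ)) = ∑' γ, D1 γ := by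
    refine tsum_congr fun γ => ?_
    by_cases h : (QuotientGroup.mk γ : Γ ⧸ N n) = QuotientGroup.mk (1 : Γ)
    · rw [if_pos h]; exact (Set.indicator_of_mem (show γ ∈ S1 from h) g).symm
    · rw [if_neg h]; exact (Set.indicator_of_notMem (show γ ∉ S1 from h) g).symm
  have e2 : g 1 = ∑' γ, D2 γ := by
    rw [tsum_eq_single (1 : Γ)
      (fun γ hγ => Set.indicator_of_notMem (by simp [hγ]) g)]
    exact (Set.indicator_of_mem (Set.mem_singleton _) g).symm
  rw [e1, e2, dist_eq_norm, ← Summable.tsum_sub h1sum h2sum]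
  have hDsum : Summable (fun γ => D1 γ - D2 γ) := h1sum.sub h2sum
  have hDnorm : Summable (fun γ => ‖D1 γ - D2 γ‖) := summable_norm_iff.2 hDsum
  set s : Set Γ := {x : Γ | x ∉ K} with hs
  have hindsum : Summable (s.indicator (fun γ => ‖g γ‖)) := hgn.indicator s
  have hle : ∀ γ, ‖D1 γ - D2 γ‖ ≤ s.indicator (fun γ => ‖g γ‖) γ := by
    intro γ
    by_cases h1 : γ = 1
    · subst h1
      have hd1 : D1 1 = g 1 := Set.indicator_of_mem (show (1:Γ) ∈ S1 from rfl) g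
      have hd2 : D2 1 = g 1 := Set.indicator_of_mem (Set.mem_singleton _) g
      rw [hd1, hd2, sub_self, norm_zero]
      exact Set.indicator_nonneg (fun x _ => norm_nonneg _) _
    · have hd2 : D2 γ = 0 := Set.indicator_of_notMem (by simp [h1]) g
      by_cases h2 : γ ∈ K
      · have hd1 : D1 γ = 0 := by
          refine Set.indicator_of_notMem (fun hh : γ ∈ S1 => ?_) g
          have hmem : γ ∈ N n := by
            have h2' : γ⁻¹ ∈ N n := by simpa using QuotientGroup.eq.mp hh
            exact (N n).inv_mem_iff.mp h2'
          exact h1 (hM n hn γ hmem ⟨1, Finset.mem_insert_self _ _, γ, h2, by simp⟩)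
        rw [hd1, hd2, sub_self, norm_zero]
        exact Set.indicator_nonneg (fun x _ => norm_nonneg _) _
      · have hind : s.indicator (fun γ => ‖g γ‖) γ = ‖g γ‖ :=
          Set.indicator_of_mem (show γ ∈ s from h2) _
        rw [hd2, sub_zero, hind, hD1]
        by_cases hh : γ ∈ S1
        · rw [Set.indicator_of_mem hh]
        · rw [Set.indicator_of_notMem hh, norm_zero]; exact norm_nonneg _
  calc ‖∑' γ, (D1 γ - D2 γ)‖ ≤ ∑' γ, ‖D1 γ - D2 γ‖ := norm_tsum_le_tsum_norm hDnorm
    _ ≤ ∑' γ, s.indicator (fun γ => ‖g γ‖) γ := Summable.tsum_le_tsum hle hDnorm hindsum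
    _ = ∑' x : s, ‖g x‖ := (tsum_subtype s _).symm
    _ < ε := hKlt

end Aux13

/-- Let `Γ` be a countable residually finite discrete group and
`(Γ_n)` a sequence of finite-index normal subgroups with `lim Γ_n = {1}`. For every
`f ∈ ℓ¹(Γ,ℂ)` and every complex polynomial `Q`, the normalized traces converge:
`⟨Q(ρ_f) δ₁, δ₁⟩ = lim_n ⟨Q(ρ_{f⁽ⁿ⁾}) δ_{1̄}, δ_{1̄}⟩` (the trace of an operator `T`
being the value of `T δ₁` at the identity). -/
theorem statement13 {Γ : Type*} [Group Γ] [Countable Γ] (hRF : ResFinite Γ)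
    (N : ℕ → Subgroup Γ) (hnorm : ∀ n, (N n).Normal) (hfi : ∀ n, (N n).FiniteIndex)
    (hlim : LimTriv N) (f : Γ → ℂ) (hf : Summable f)
    (A : H2 Γ →L[ℂ] H2 Γ) (hA : IsRho f A)
    (B : ∀ n : ℕ, ((Γ ⧸ N n) → ℂ) →ₗ[ℂ] ((Γ ⧸ N n) → ℂ))
    (hB : ∀ n : ℕ, haveI := hnorm n;
      ∀ (w : (Γ ⧸ N n) → ℂ) (δ : Γ ⧸ N n),
        B n w δ = ∑' δ' : Γ ⧸ N n, w (δ * δ') * fQuot f (N n) δ')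
    (Q : Polynomial ℂ) :
    Filter.Tendsto
      (fun n : ℕ =>
        (Polynomial.aeval (B n) Q) (deltaQuot (N n)) (QuotientGroup.mk (1 : Γ)))
      Filter.atTop
      (nhds (((Polynomial.aeval A Q) deltaL2) (1 : Γ))) := by
  classical
  have hTn : ∀ n : ℕ,
      (Polynomial.aeval (B n) Q) (deltaQuot (N n)) (QuotientGroup.mk (1 : Γ))
        = ∑ i ∈ Finset.range (Q.natDegree + 1),
            Q.coeff i * fQuot (gk A i) (N n) (QuotientGroup.mk (1 : Γ)) := by
    intro n
    haveI := hnorm n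
    rw [Polynomial.aeval_eq_sum_range, LinearMap.sum_apply, Finset.sum_apply]
    refine Finset.sum_congr rfl fun i _ => ?_
    rw [LinearMap.smul_apply, Pi.smul_apply, smul_eq_mul,
      Bpow_eq hf hA (N n) (B n) (hB n) i]
  have key : ∀ (s : Finset ℕ) (v : ℕ → H2 Γ) (γ : Γ),
      (((∑ i ∈ s, v i : H2 Γ)) : ∀ _ : Γ, ℂ) γ = ∑ i ∈ s, ((v i : ∀ _ : Γ, ℂ)) γ := by
    intro s v γ
    induction s using Finset.cons_induction with
    | empty => simp
    | cons a t ha ih =>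
        rw [Finset.sum_cons, Finset.sum_cons, lp.coeFn_add, Pi.add_apply, ih]
  have hS : ((Polynomial.aeval A Q) deltaL2) (1 : Γ)
      = ∑ i ∈ Finset.range (Q.natDegree + 1), Q.coeff i * gk A i 1 := by
    rw [Polynomial.aeval_eq_sum_range, ContinuousLinearMap.sum_apply, key]
    refine Finset.sum_congr rfl fun i _ => ?_
    rw [ContinuousLinearMap.smul_apply, lp.coeFn_smul, Pi.smul_apply, smul_eq_mul]
    rfl
  simp only [hTn]
  rw [hS]
  exact tendsto_finset_sum _ fun i _ =>
    Filter.Tendsto.const_mul (Q.coeff i) (trace_tendsto hf hA N hlim i)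

end
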